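/- Let O : [0,1]² → [0,1] be a strict overlap function, B : [0,1]² → [0,1] a commutative aggregation function, α ∈ (0,1) and β ∈ [0,1] with α ≠ β. Let IF_{O,B}^α : L([0,1])² → L([0,1]) be the interval-valued function whose value at (X,Y) is the unique interval R with K_α(R) = O(K_α(X), K_α(Y)) and λ_α(R) = B(λ_α(X), λ_α(Y)), and let m(X,Y) = min{w(IF_{O,B}^α(X,Y)), B(w(X), w(Y))}. Define IOw_B^α : L([0,1])² → L([0,1]) by letting IOw_B^α(X,Y) be the interval R with K_α(R) = O(K_α(X), K_α(Y)) and w(R) = m(X,Y). Then IOw_B^α is a width-limited interval-valued overlap function with respect to the tuple (≤_{α,β}, ≤_{α,β}, B). -/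

import Mathlib

open Set

noncomputable section

structure IV : Type where
  lo : ℝ
  hi : ℝ
  lo_mem : lo ∈ Set.Icc (0:ℝ) 1
  hi_mem : hi ∈ Set.Icc (0:ℝ) 1
  lo_le_hi : lo ≤ hi

namespace IV

/-- The width of an interval. -/
def w (X : IV) : ℝ := X.hi - X.lo

/-- The product (componentwise) order on intervals. -/
def lePr (X Y : IV) : Prop := X.lo ≤ Y.lo ∧ X.hi ≤ Y.hi

end IV

/-- `F` maps `[0,1]²` into `[0,1]`. -/
def MapsIcc (F : ℝ → ℝ → ℝ) : Prop :=
  ∀ x ∈ Set.Icc (0:ℝ) 1, ∀ y ∈ Set.Icc (0:ℝ) 1, F x y ∈ Set.Icc (0:ℝ) 1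

/-- `F` is increasing in each argument on `[0,1]²`. -/
def IncrIcc (F : ℝ → ℝ → ℝ) : Prop :=
  ∀ x₁ ∈ Set.Icc (0:ℝ) 1, ∀ x₂ ∈ Set.Icc (0:ℝ) 1, ∀ y₁ ∈ Set.Icc (0:ℝ) 1, ∀ y₂ ∈ Set.Icc (0:ℝ) 1,
    x₁ ≤ x₂ → y₁ ≤ y₂ → F x₁ y₁ ≤ F x₂ y₂

/-- Aggregation function on `[0,1]²`. -/
def IsAggregation (A : ℝ → ℝ → ℝ) : Prop :=
  MapsIcc A ∧ IncrIcc A ∧ A 0 0 = 0 ∧ A 1 1 = 1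

/-- The dual of a function with respect to the Zadeh negation. -/
def dualF (F : ℝ → ℝ → ℝ) : ℝ → ℝ → ℝ := fun x y => 1 - F (1 - x) (1 - y)

/-- Ultramodularity of a bivariate function on `[0,1]²`. -/
def Ultramodular (A : ℝ → ℝ → ℝ) : Prop :=
  ∀ x₁ ∈ Set.Icc (0:ℝ) 1, ∀ x₂ ∈ Set.Icc (0:ℝ) 1, ∀ y₁ ∈ Set.Icc (0:ℝ) 1, ∀ y₂ ∈ Set.Icc (0:ℝ) 1,
    ∀ ε ∈ Set.Icc (0:ℝ) 1, ∀ δ ∈ Set.Icc (0:ℝ) 1,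
      x₂ + ε ∈ Set.Icc (0:ℝ) 1 → y₂ + δ ∈ Set.Icc (0:ℝ) 1 → x₁ ≤ x₂ → y₁ ≤ y₂ →
        A (x₁ + ε) (y₁ + δ) - A x₁ y₁ ≤ A (x₂ + ε) (y₂ + δ) - A x₂ y₂

/-- `(a,b)`-ultramodularity of a bivariate function on `[0,1]²`. -/
def ABUltramodular (A : ℝ → ℝ → ℝ) (a b : ℝ) : Prop :=
  ∀ x ∈ Set.Icc (0:ℝ) 1, ∀ y ∈ Set.Icc (0:ℝ) 1, ∀ ε ∈ Set.Icc (0:ℝ) 1, ∀ δ ∈ Set.Icc (0:ℝ) 1,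
    x + ε ∈ Set.Icc (0:ℝ) 1 → y + δ ∈ Set.Icc (0:ℝ) 1 →
    a - ε ∈ Set.Icc (0:ℝ) 1 → b - δ ∈ Set.Icc (0:ℝ) 1 →
      A (x + ε) (y + δ) - A x y ≤ A a b - A (a - ε) (b - δ)

/-- `𝔏(IF)(ε,δ)`: the supremum of the widths `w(IF(X,Y))` over all intervals `X` of width `ε`
and `Y` of width `δ` (which are exactly the intervals `[u,u+ε]`, `u ∈ [0,1-ε]`, and
`[v,v+δ]`, `v ∈ [0,1-δ]`). -/
def Lwl (IF : IV → IV → IV) (ε δ : ℝ) : ℝ :=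
  sSup {t : ℝ | ∃ X Y : IV, X.w = ε ∧ Y.w = δ ∧ t = (IF X Y).w}

/-- `IF` is width-limited by `B`. -/
def WidthLimited (IF : IV → IV → IV) (B : ℝ → ℝ → ℝ) : Prop :=
  ∀ X Y : IV, (IF X Y).w ≤ B X.w Y.w

/-- Overlap function on `[0,1]²`. -/
def IsOverlap (O : ℝ → ℝ → ℝ) : Prop :=
  MapsIcc O ∧
  (∀ x ∈ Set.Icc (0:ℝ) 1, ∀ y ∈ Set.Icc (0:ℝ) 1, O x y = O y x) ∧
  (∀ x ∈ Set.Icc (0:ℝ) 1, ∀ y ∈ Set.Icc (0:ℝ) 1, (O x y = 0 ↔ x * y = 0)) ∧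
  (∀ x ∈ Set.Icc (0:ℝ) 1, ∀ y ∈ Set.Icc (0:ℝ) 1, (O x y = 1 ↔ x * y = 1)) ∧
  IncrIcc O ∧
  ContinuousOn (fun p : ℝ × ℝ => O p.1 p.2) (Set.Icc (0:ℝ) 1 ×ˢ Set.Icc (0:ℝ) 1)

/-- Strict overlap function. -/
def IsStrictOverlap (O : ℝ → ℝ → ℝ) : Prop :=
  IsOverlap O ∧
  ∀ x ∈ Set.Ioc (0:ℝ) 1, ∀ y ∈ Set.Ioc (0:ℝ) 1, ∀ z ∈ Set.Ioc (0:ℝ) 1, (x < y ↔ O x z < O y z)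

/-- `K_α(x,y) = x + α (y - x)`. -/
def Kab (α x y : ℝ) : ℝ := x + α * (y - x)

/-- `K_α` of an interval: `K_α(X) = K_α(X⁻, X⁺)`. -/
def KI (α : ℝ) (X : IV) : ℝ := X.lo + α * (X.hi - X.lo)

/-- The admissible order `≤_{α,β}` generated by `(K_α, K_β)`. -/
def leAB (α β : ℝ) (X Y : IV) : Prop :=
  KI α X < KI α Y ∨ (KI α X = KI α Y ∧ KI β X ≤ KI β Y)

/-- Width-limited interval-valued overlap function with respect to `(le1, le2, B)`. -/
def IsWIVOverlap (IOw : IV → IV → IV) (le1 le2 : IV → IV → Prop) (B : ℝ → ℝ → ℝ) : Prop :=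
  (∀ X Y : IV, IOw X Y = IOw Y X) ∧
  (∀ X Y : IV, ((IOw X Y).lo = 0 ∧ (IOw X Y).hi = 0) ↔ (X.lo * Y.lo = 0 ∧ X.hi * Y.hi = 0)) ∧
  (∀ X Y : IV, ((IOw X Y).lo = 1 ∧ (IOw X Y).hi = 1) ↔ (X.lo * Y.lo = 1 ∧ X.hi * Y.hi = 1)) ∧
  (∀ X₁ X₂ Y₁ Y₂ : IV, le1 X₁ X₂ → le1 Y₁ Y₂ → le2 (IOw X₁ Y₁) (IOw X₂ Y₂)) ∧
  (∀ X Y : IV, (IOw X Y).w ≤ B X.w Y.w)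

/-- `d_α(c)`: the maximal possible width of an interval `Z` with `K_α(Z) = c`. -/
def dmax (α c : ℝ) : ℝ := min (c / α) ((1 - c) / (1 - α))

/-- `λ_α(X) = w(X) / d_α(K_α(X))`, with the convention `0/0 = 1`. -/
def lam (α : ℝ) (X : IV) : ℝ :=
  if dmax α (KI α X) = 0 then 1 else X.w / dmax α (KI α X)

section Aux

lemma IV.ext' {X Y : IV} (h1 : X.lo = Y.lo) (h2 : X.hi = Y.hi) : X = Y := by
  cases X; cases Y; simp_all

lemma KI_mem {α : ℝ} (hα : α ∈ Set.Icc (0:ℝ) 1) (X : IV) : KI α X ∈ Set.Icc (0:ℝ) 1 := by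
  unfold KI
  constructor
  · nlinarith [X.lo_mem.1, X.lo_le_hi, hα.1]
  · nlinarith [X.hi_mem.2, X.lo_le_hi, hα.2]

lemma w_mem (X : IV) : X.w ∈ Set.Icc (0:ℝ) 1 := by
  unfold IV.w
  constructor
  · linarith [X.lo_le_hi]
  · linarith [X.hi_mem.2, X.lo_mem.1]

lemma KI_eq_zero {α : ℝ} (hα : α ∈ Set.Ioo (0:ℝ) 1) {X : IV} (h : KI α X = 0) :
    X.lo = 0 ∧ X.hi = 0 := by
  unfold KI at h
  constructor
  · nlinarith [X.lo_mem.1, X.lo_le_hi, hα.1, hα.2]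
  · nlinarith [X.lo_mem.1, X.lo_le_hi, hα.1, hα.2]

lemma KI_eq_one {α : ℝ} (hα : α ∈ Set.Ioo (0:ℝ) 1) {X : IV} (h : KI α X = 1) :
    X.lo = 1 ∧ X.hi = 1 := by
  unfold KI at h
  constructor
  · nlinarith [X.lo_mem.2, X.hi_mem.2, X.lo_le_hi, hα.1, hα.2]
  · nlinarith [X.lo_mem.2, X.hi_mem.2, X.lo_le_hi, hα.1, hα.2]

lemma dmax_nonneg {α : ℝ} (hα : α ∈ Set.Ioo (0:ℝ) 1) (X : IV) :
    0 ≤ dmax α (KI α X) := by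
  have h := KI_mem (Set.mem_Icc_of_Ioo hα) X
  unfold dmax
  refine le_min (div_nonneg h.1 (le_of_lt hα.1)) (div_nonneg (by linarith [h.2]) (by linarith [hα.2]))

lemma w_le_dmax {α : ℝ} (hα : α ∈ Set.Ioo (0:ℝ) 1) (X : IV) :
    X.w ≤ dmax α (KI α X) := by
  unfold dmax KI IV.w
  refine le_min ?_ ?_
  · rw [le_div_iff₀ hα.1]; nlinarith [X.lo_mem.1]
  · rw [le_div_iff₀ (by linarith [hα.2] : (0:ℝ) < 1 - α)]; nlinarith [X.hi_mem.2]

lemma w_eq_zero_of_dmax_zero {α : ℝ} (hα : α ∈ Set.Ioo (0:ℝ) 1) {X : IV}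
    (hd : dmax α (KI α X) = 0) : X.w = 0 := by
  unfold dmax at hd
  rcases min_choice (KI α X / α) ((1 - KI α X) / (1 - α)) with hc | hc <;> rw [hc] at hd
  · have h0 : KI α X = 0 := by
      rcases div_eq_zero_iff.mp hd with h | h
      · exact h
      · exact absurd h (ne_of_gt hα.1)
    have := KI_eq_zero hα h0
    unfold IV.w; rw [this.1, this.2]; ring
  · have h0 : KI α X = 1 := by
      have hne : (1:ℝ) - α ≠ 0 := by linarith [hα.2]
      field_simp at hd
      linarith [hd]
    have := KI_eq_one hα h0
    unfold IV.w; rw [this.1, this.2]; ring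

lemma lam_mem {α : ℝ} (hα : α ∈ Set.Ioo (0:ℝ) 1) (X : IV) :
    lam α X ∈ Set.Icc (0:ℝ) 1 := by
  unfold lam
  by_cases hd : dmax α (KI α X) = 0
  · rw [if_pos hd]; exact ⟨zero_le_one, le_refl 1⟩
  · rw [if_neg hd]
    have hpos : 0 < dmax α (KI α X) := lt_of_le_of_ne (dmax_nonneg hα X) (Ne.symm hd)
    exact ⟨div_nonneg (w_mem X).1 (le_of_lt hpos), (div_le_one hpos).mpr (w_le_dmax hα X)⟩

lemma lam_le_iff {α : ℝ} (hα : α ∈ Set.Ioo (0:ℝ) 1) {X Y : IV} (h : KI α X = KI α Y) :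
    lam α X ≤ lam α Y ↔ X.w ≤ Y.w := by
  unfold lam
  rw [h]
  by_cases hd : dmax α (KI α Y) = 0
  · have hx : X.w = 0 := w_eq_zero_of_dmax_zero hα (by rw [h]; exact hd)
    have hy : Y.w = 0 := w_eq_zero_of_dmax_zero hα hd
    simp [hd, hx, hy]
  · rw [if_neg hd, if_neg hd]
    have hpos : 0 < dmax α (KI α Y) := lt_of_le_of_ne (dmax_nonneg hα Y) (Ne.symm hd)
    exact div_le_div_iff_of_pos_right hpos

lemma eq_of_KI_w {α : ℝ} {X Y : IV} (h1 : KI α X = KI α Y) (h2 : X.w = Y.w) : X = Y := by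
  unfold KI at h1
  unfold IV.w at h2
  have h3 : α * (X.hi - X.lo) = α * (Y.hi - Y.lo) := by rw [h2]
  exact IV.ext' (by linarith) (by linarith)

lemma KI_beta (α β : ℝ) (X : IV) : KI β X = KI α X + (β - α) * X.w := by
  unfold KI IV.w; ring

lemma leAB_KIα {α β : ℝ} {X Y : IV} (h : leAB α β X Y) : KI α X ≤ KI α Y :=
  h.elim le_of_lt (fun h => le_of_eq h.1)

end Aux

theorem statement18 (O B : ℝ → ℝ → ℝ) (hO : IsStrictOverlap O)
    (hB : IsAggregation B)
    (hBc : ∀ x ∈ Set.Icc (0:ℝ) 1, ∀ y ∈ Set.Icc (0:ℝ) 1, B x y = B y x)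
    (α β : ℝ) (hα : α ∈ Set.Ioo (0:ℝ) 1) (hβ : β ∈ Set.Icc (0:ℝ) 1) (hne : α ≠ β)
    (IF : IV → IV → IV)
    (hIF : ∀ X Y : IV,
      KI α (IF X Y) = O (KI α X) (KI α Y) ∧ lam α (IF X Y) = B (lam α X) (lam α Y))
    (IOw : IV → IV → IV)
    (hIOw : ∀ X Y : IV,
      KI α (IOw X Y) = O (KI α X) (KI α Y) ∧
      (IOw X Y).w = min (IF X Y).w (B X.w Y.w)) :
    IsWIVOverlap IOw (leAB α β) (leAB α β) B := by
  obtain ⟨⟨hOmap, hOcomm, hOzero, hOone, hOmono, _⟩, hOstrict⟩ := hO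
  obtain ⟨hBmap, hBmono, _, _⟩ := hB
  have hαI : α ∈ Set.Icc (0:ℝ) 1 := Set.mem_Icc_of_Ioo hα
  refine ⟨?_, ?_, ?_, ?_, ?_⟩
  -- commutativity
  · intro X Y
    have hKX := KI_mem hαI X
    have hKY := KI_mem hαI Y
    have h1 : KI α (IOw X Y) = KI α (IOw Y X) := by
      rw [(hIOw X Y).1, (hIOw Y X).1, hOcomm _ hKX _ hKY]
    have hIFeq : IF X Y = IF Y X := by
      refine eq_of_KI_w (α := α) ?_ ?_
      · rw [(hIF X Y).1, (hIF Y X).1, hOcomm _ hKX _ hKY]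
      · have hK : KI α (IF X Y) = KI α (IF Y X) := by
          rw [(hIF X Y).1, (hIF Y X).1, hOcomm _ hKX _ hKY]
        have hlam : lam α (IF X Y) = lam α (IF Y X) := by
          rw [(hIF X Y).2, (hIF Y X).2, hBc _ (lam_mem hα X) _ (lam_mem hα Y)]
        exact le_antisymm ((lam_le_iff hα hK).mp hlam.le) ((lam_le_iff hα hK.symm).mp hlam.ge)
    have h2 : (IOw X Y).w = (IOw Y X).w := by
      rw [(hIOw X Y).2, (hIOw Y X).2, hIFeq, hBc _ (w_mem X) _ (w_mem Y)]
    exact eq_of_KI_w h1 h2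
  -- (IOw2)
  · intro X Y
    have hKX := KI_mem hαI X
    have hKY := KI_mem hαI Y
    constructor
    · rintro ⟨hl, hr⟩
      have h0 : KI α (IOw X Y) = 0 := by unfold KI; rw [hl, hr]; ring
      rw [(hIOw X Y).1] at h0
      have hprod : KI α X * KI α Y = 0 := (hOzero _ hKX _ hKY).mp h0
      rcases mul_eq_zero.mp hprod with h | h
      · obtain ⟨h1, h2⟩ := KI_eq_zero hα h
        exact ⟨by rw [h1]; ring, by rw [h2]; ring⟩
      · obtain ⟨h1, h2⟩ := KI_eq_zero hα h
        exact ⟨by rw [h1]; ring, by rw [h2]; ring⟩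
    · rintro ⟨_, hr⟩
      have hK0 : KI α X = 0 ∨ KI α Y = 0 := by
        rcases mul_eq_zero.mp hr with h | h
        · left
          have hlo : X.lo = 0 := le_antisymm (h ▸ X.lo_le_hi) X.lo_mem.1
          unfold KI; rw [hlo, h]; ring
        · right
          have hlo : Y.lo = 0 := le_antisymm (h ▸ Y.lo_le_hi) Y.lo_mem.1
          unfold KI; rw [hlo, h]; ring
      have hO0 : O (KI α X) (KI α Y) = 0 := by
        refine (hOzero _ hKX _ hKY).mpr ?_
        rcases hK0 with h | h
        · rw [h]; ring
        · rw [h]; ring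
      have : KI α (IOw X Y) = 0 := by rw [(hIOw X Y).1, hO0]
      exact KI_eq_zero hα this
  -- (IOw3)
  · intro X Y
    have hKX := KI_mem hαI X
    have hKY := KI_mem hαI Y
    constructor
    · rintro ⟨hl, hr⟩
      have h1 : KI α (IOw X Y) = 1 := by unfold KI; rw [hl, hr]; ring
      rw [(hIOw X Y).1] at h1
      have hprod : KI α X * KI α Y = 1 := (hOone _ hKX _ hKY).mp h1
      have hx1 : KI α X = 1 := by nlinarith [hKX.1, hKX.2, hKY.1, hKY.2]
      have hy1 : KI α Y = 1 := by nlinarith [hKX.1, hKX.2, hKY.1, hKY.2]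
      obtain ⟨ha, hb⟩ := KI_eq_one hα hx1
      obtain ⟨hc, hd⟩ := KI_eq_one hα hy1
      exact ⟨by rw [ha, hc]; ring, by rw [hb, hd]; ring⟩
    · rintro ⟨hl, _⟩
      have hx : X.lo = 1 := by nlinarith [X.lo_mem.1, X.lo_mem.2, Y.lo_mem.1, Y.lo_mem.2]
      have hy : Y.lo = 1 := by nlinarith [X.lo_mem.1, X.lo_mem.2, Y.lo_mem.1, Y.lo_mem.2]
      have hxh : X.hi = 1 := le_antisymm X.hi_mem.2 (hx ▸ X.lo_le_hi)
      have hyh : Y.hi = 1 := le_antisymm Y.hi_mem.2 (hy ▸ Y.lo_le_hi)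
      have hKX1 : KI α X = 1 := by unfold KI; rw [hx, hxh]; ring
      have hKY1 : KI α Y = 1 := by unfold KI; rw [hy, hyh]; ring
      have hO1 : O (KI α X) (KI α Y) = 1 := by
        refine (hOone _ hKX _ hKY).mpr ?_; rw [hKX1, hKY1]; ring
      have : KI α (IOw X Y) = 1 := by rw [(hIOw X Y).1, hO1]
      exact KI_eq_one hα this
  -- monotonicity
  · intro X₁ X₂ Y₁ Y₂ hX hY
    have haI₁ := KI_mem hαI X₁
    have haI₂ := KI_mem hαI X₂
    have hbI₁ := KI_mem hαI Y₁
    have hbI₂ := KI_mem hαI Y₂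
    have ha : KI α X₁ ≤ KI α X₂ := leAB_KIα hX
    have hb : KI α Y₁ ≤ KI α Y₂ := leAB_KIα hY
    have hc : O (KI α X₁) (KI α Y₁) ≤ O (KI α X₂) (KI α Y₂) :=
      hOmono _ haI₁ _ haI₂ _ hbI₁ _ hbI₂ ha hb
    rcases lt_or_eq_of_le hc with hlt | heq
    · left
      rw [(hIOw X₁ Y₁).1, (hIOw X₂ Y₂).1]
      exact hlt
    · by_cases h0 : O (KI α X₂) (KI α Y₂) = 0
      · -- zero case: both results are [0,0]
        have h1 : KI α (IOw X₁ Y₁) = 0 := by rw [(hIOw X₁ Y₁).1, heq, h0]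
        have h2 : KI α (IOw X₂ Y₂) = 0 := by rw [(hIOw X₂ Y₂).1, h0]
        obtain ⟨l1, r1⟩ := KI_eq_zero hα h1
        obtain ⟨l2, r2⟩ := KI_eq_zero hα h2
        right
        refine ⟨h1.trans h2.symm, ?_⟩
        unfold KI; rw [l1, r1, l2, r2]
      · have h1ne : O (KI α X₁) (KI α Y₁) ≠ 0 := by rw [heq]; exact h0
        have hprod : KI α X₁ * KI α Y₁ ≠ 0 :=
          fun h => h1ne ((hOzero _ haI₁ _ hbI₁).mpr h)
        have ha1pos : 0 < KI α X₁ :=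
          lt_of_le_of_ne haI₁.1 (Ne.symm (left_ne_zero_of_mul hprod))
        have hb1pos : 0 < KI α Y₁ :=
          lt_of_le_of_ne hbI₁.1 (Ne.symm (right_ne_zero_of_mul hprod))
        have ha2pos : 0 < KI α X₂ := lt_of_lt_of_le ha1pos ha
        have hb2pos : 0 < KI α Y₂ := lt_of_lt_of_le hb1pos hb
        have hmid1 : O (KI α X₁) (KI α Y₁) ≤ O (KI α X₂) (KI α Y₁) :=
          hOmono _ haI₁ _ haI₂ _ hbI₁ _ hbI₁ ha le_rfl
        have hmid2 : O (KI α X₂) (KI α Y₁) ≤ O (KI α X₂) (KI α Y₂) :=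
          hOmono _ haI₂ _ haI₂ _ hbI₁ _ hbI₂ le_rfl hb
        have e1 : O (KI α X₁) (KI α Y₁) = O (KI α X₂) (KI α Y₁) := by
          apply le_antisymm hmid1
          rw [heq]
          exact hmid2
        have e2 : O (KI α X₂) (KI α Y₁) = O (KI α X₂) (KI α Y₂) := by
          apply le_antisymm hmid2
          rw [← heq]
          exact hmid1
        have haa : KI α X₁ = KI α X₂ := by
          by_contra hne'
          have hlt' : KI α X₁ < KI α X₂ := lt_of_le_of_ne ha hne'
          have := (hOstrict _ ⟨ha1pos, haI₁.2⟩ _ ⟨ha2pos, haI₂.2⟩ _ ⟨hb1pos, hbI₁.2⟩).mp hlt'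
          exact absurd e1 (ne_of_lt this)
        have hbb : KI α Y₁ = KI α Y₂ := by
          by_contra hne'
          have hlt' : KI α Y₁ < KI α Y₂ := lt_of_le_of_ne hb hne'
          have h' := (hOstrict _ ⟨hb1pos, hbI₁.2⟩ _ ⟨hb2pos, hbI₂.2⟩ _ ⟨ha2pos, haI₂.2⟩).mp hlt'
          rw [hOcomm _ hbI₁ _ haI₂, hOcomm _ hbI₂ _ haI₂] at h'
          exact absurd e2 (ne_of_lt h')
        -- from the order hypotheses we get KI β inequalities
        have hwX : (β - α) * X₁.w ≤ (β - α) * X₂.w := by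
          rcases hX with h | ⟨_, hle⟩
          · exact absurd haa (ne_of_lt h)
          · rw [KI_beta α β X₁, KI_beta α β X₂, haa] at hle
            linarith
        have hwY : (β - α) * Y₁.w ≤ (β - α) * Y₂.w := by
          rcases hY with h | ⟨_, hle⟩
          · exact absurd hbb (ne_of_lt h)
          · rw [KI_beta α β Y₁, KI_beta α β Y₂, hbb] at hle
            linarith
        have hKIF : KI α (IF X₁ Y₁) = KI α (IF X₂ Y₂) := by
          rw [(hIF X₁ Y₁).1, (hIF X₂ Y₂).1, haa, hbb]
        have hKIOw : KI α (IOw X₁ Y₁) = KI α (IOw X₂ Y₂) := by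
          rw [(hIOw X₁ Y₁).1, (hIOw X₂ Y₂).1, haa, hbb]
        right
        refine ⟨hKIOw, ?_⟩
        rw [KI_beta α β (IOw X₁ Y₁), KI_beta α β (IOw X₂ Y₂), hKIOw]
        have key : (β - α) * (IOw X₁ Y₁).w ≤ (β - α) * (IOw X₂ Y₂).w := by
          rcases lt_or_gt_of_ne hne with hab | hab
          · -- α < β
            have hba : (0:ℝ) < β - α := by linarith
            have hwx : X₁.w ≤ X₂.w := le_of_mul_le_mul_left hwX hba
            have hwy : Y₁.w ≤ Y₂.w := le_of_mul_le_mul_left hwY hba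
            have hlamX : lam α X₁ ≤ lam α X₂ := (lam_le_iff hα haa).mpr hwx
            have hlamY : lam α Y₁ ≤ lam α Y₂ := (lam_le_iff hα hbb).mpr hwy
            have hlamIF : lam α (IF X₁ Y₁) ≤ lam α (IF X₂ Y₂) := by
              rw [(hIF X₁ Y₁).2, (hIF X₂ Y₂).2]
              exact hBmono _ (lam_mem hα X₁) _ (lam_mem hα X₂) _ (lam_mem hα Y₁)
                _ (lam_mem hα Y₂) hlamX hlamY
            have hwIF : (IF X₁ Y₁).w ≤ (IF X₂ Y₂).w := (lam_le_iff hα hKIF).mp hlamIF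
            have hwB : B X₁.w Y₁.w ≤ B X₂.w Y₂.w :=
              hBmono _ (w_mem X₁) _ (w_mem X₂) _ (w_mem Y₁) _ (w_mem Y₂) hwx hwy
            have : (IOw X₁ Y₁).w ≤ (IOw X₂ Y₂).w := by
              rw [(hIOw X₁ Y₁).2, (hIOw X₂ Y₂).2]
              exact min_le_min hwIF hwB
            exact mul_le_mul_of_nonneg_left this (le_of_lt hba)
          · -- β < α
            have hba : β - α < 0 := by linarith
            have hwx : X₂.w ≤ X₁.w := by nlinarith
            have hwy : Y₂.w ≤ Y₁.w := by nlinarith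
            have hlamX : lam α X₂ ≤ lam α X₁ := (lam_le_iff hα haa.symm).mpr hwx
            have hlamY : lam α Y₂ ≤ lam α Y₁ := (lam_le_iff hα hbb.symm).mpr hwy
            have hlamIF : lam α (IF X₂ Y₂) ≤ lam α (IF X₁ Y₁) := by
              rw [(hIF X₁ Y₁).2, (hIF X₂ Y₂).2]
              exact hBmono _ (lam_mem hα X₂) _ (lam_mem hα X₁) _ (lam_mem hα Y₂)
                _ (lam_mem hα Y₁) hlamX hlamY
            have hwIF : (IF X₂ Y₂).w ≤ (IF X₁ Y₁).w := (lam_le_iff hα hKIF.symm).mp hlamIF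
            have hwB : B X₂.w Y₂.w ≤ B X₁.w Y₁.w :=
              hBmono _ (w_mem X₂) _ (w_mem X₁) _ (w_mem Y₂) _ (w_mem Y₁) hwx hwy
            have : (IOw X₂ Y₂).w ≤ (IOw X₁ Y₁).w := by
              rw [(hIOw X₁ Y₁).2, (hIOw X₂ Y₂).2]
              exact min_le_min hwIF hwB
            exact mul_le_mul_of_nonpos_left this (le_of_lt hba)
        linarith
  -- width limit
  · intro X Y
    rw [(hIOw X Y).2]
    exact min_le_right _ _
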